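/- Let (R, m, k) be a complete Noetherian local ring, E = E_R(k) the injective hull of the residue field, and M a finitely generated R-module. Then the natural map M → Hom_R(Hom_R(M, E), E) is an isomorphism, and Hom_R(M, E) is an Artinian R-module. -/

import Mathlib

open Function IsLocalRing

namespace MatlisAux

universe uu vv

variable {R : Type*} [CommRing R] {E : Type*} [AddCommGroup E] [Module R E]


variable {R : Type*} [CommRing R] {E : Type*} [AddCommGroup E] [Module R E]

/-- Cogenerator property: every nonzero element of any module is detected by a map to `E`. -/
theorem cog [IsLocalRing R] (hB : Module.Baer R E) {ι : ResidueField R →ₗ[R] E}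
    (hι : Function.Injective ι)
    {X : Type*} [AddCommGroup X] [Module R X] (x : X) (hx : x ≠ 0) :
    ∃ φ : X →ₗ[R] E, φ x ≠ 0 := by
  set T : R →ₗ[R] X := LinearMap.toSpanSingleton R X x with hT
  have hker : LinearMap.ker T ≤ maximalIdeal R := by
    apply le_maximalIdeal
    intro h
    have : (1 : R) ∈ LinearMap.ker T := h ▸ Submodule.mem_top
    simp only [LinearMap.mem_ker, hT, LinearMap.toSpanSingleton_apply, one_smul] at this
    exact hx this
  set ψ : R →ₗ[R] E := ι ∘ₗ (maximalIdeal R).mkQ with hψ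
  have hkerψ : LinearMap.ker T ≤ LinearMap.ker ψ := by
    intro r hr
    simp only [hψ, LinearMap.mem_ker, LinearMap.comp_apply, Submodule.mkQ_apply]
    have h0 : Submodule.mkQ (maximalIdeal R) r = 0 :=
      (Submodule.Quotient.mk_eq_zero _).2 (hker hr)
    exact (congrArg ι h0).trans (map_zero ι)
  -- factor ψ through the range of T
  set q : R ⧸ LinearMap.ker T →ₗ[R] E := Submodule.liftQ _ ψ hkerψ with hq
  set e := LinearMap.quotKerEquivRange T with he
  set φ₀ : LinearMap.range T →ₗ[R] E := q ∘ₗ (e.symm : LinearMap.range T →ₗ[R] R ⧸ LinearMap.ker T) with hφ₀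
  obtain ⟨φ, hφ⟩ := hB.extension_property (LinearMap.range T).subtype Subtype.val_injective φ₀
  refine ⟨φ, ?_⟩
  have hxmem : x ∈ LinearMap.range T := ⟨1, by simp [hT]⟩
  have : φ x = φ₀ ⟨x, hxmem⟩ := by
    conv_lhs => rw [show x = (LinearMap.range T).subtype ⟨x, hxmem⟩ from rfl]
    rw [← LinearMap.comp_apply, hφ]
  rw [this]
  have hex : e (Submodule.Quotient.mk 1) = ⟨x, hxmem⟩ := by
    apply Subtype.ext
    rw [he, LinearMap.quotKerEquivRange_apply_mk]
    simp [hT]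
  have : φ₀ ⟨x, hxmem⟩ = q (Submodule.Quotient.mk 1) := by
    rw [hφ₀, LinearMap.comp_apply, ← hex]
    simp
  rw [this]
  have : q (Submodule.Quotient.mk 1) = ι (residue R 1) := rfl
  rw [this]
  intro hzero
  have h1 : ι (residue R 1) = ι 0 := by rw [hzero, map_zero]
  have := hι h1
  simp at this

/-- evaluation is injective -/
theorem ev_inj [IsLocalRing R] (hB : Module.Baer R E) {ι : ResidueField R →ₗ[R] E}
    (hι : Function.Injective ι)
    {X : Type*} [AddCommGroup X] [Module R X] :
    Function.Injective (LinearMap.applyₗ (R := R) (M := X) (M₂ := E)) := by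
  rw [injective_iff_map_eq_zero]
  intro x hx
  by_contra h
  obtain ⟨φ, hφ⟩ := cog hB hι x h
  exact hφ (by simpa using DFunLike.congr_fun hx φ)

section dual

variable {A B C : Type*} [AddCommGroup A] [Module R A] [AddCommGroup B] [Module R B]
  [AddCommGroup C] [Module R C]

/-- dual of a surjective map is injective -/
theorem dual_inj {f : A →ₗ[R] B} (hf : Surjective f) :
    Function.Injective (LinearMap.lcomp R E f) := by
  intro φ ψ h
  ext b
  obtain ⟨a, rfl⟩ := hf b
  exact DFunLike.congr_fun h a

/-- dual of an injective map is surjective -/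
theorem dual_surj (hB : Module.Baer R E) {f : A →ₗ[R] B} (hf : Function.Injective f) :
    Function.Surjective (LinearMap.lcomp R E f) := by
  intro g
  obtain ⟨h, hh⟩ := hB.extension_property f hf g
  exact ⟨h, hh⟩

/-- exactness of the dual sequence in the middle, when `g` is surjective -/
theorem dual_exact {f : A →ₗ[R] B} {g : B →ₗ[R] C} (hg : Surjective g)
    (hfg : LinearMap.range f = LinearMap.ker g) (φ : B →ₗ[R] E)
    (hφ : LinearMap.lcomp R E f φ = 0) : ∃ ψ : C →ₗ[R] E, LinearMap.lcomp R E g ψ = φ := by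
  have hker : LinearMap.ker g ≤ LinearMap.ker φ := by
    rw [← hfg]
    rintro b ⟨a, rfl⟩
    exact DFunLike.congr_fun hφ a
  refine ⟨(Submodule.liftQ _ φ hker) ∘ₗ (LinearMap.quotKerEquivRange g).symm.toLinearMap ∘ₗ
    LinearMap.codRestrict (LinearMap.range g) LinearMap.id
      (fun c => LinearMap.range_eq_top.2 hg ▸ Submodule.mem_top), ?_⟩
  ext b
  simp only [LinearMap.lcomp_apply, LinearMap.comp_apply, LinearMap.codRestrict_apply,
    LinearMap.id_apply, LinearEquiv.coe_coe]
  have hmem : g b ∈ LinearMap.range g := ⟨b, rfl⟩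
  have : (⟨g b, hmem⟩ : LinearMap.range g) =
      ⟨g b, LinearMap.mem_range_self g b⟩ := rfl
  rw [show ((LinearMap.codRestrict (LinearMap.range g) LinearMap.id
      (fun c => LinearMap.range_eq_top.2 hg ▸ Submodule.mem_top)) (g b) : LinearMap.range g) =
      ⟨g b, LinearMap.mem_range_self g b⟩ from rfl,
    LinearMap.quotKerEquivRange_symm_apply_image]
  simp

/-- naturality of evaluation -/
theorem ev_nat (f : A →ₗ[R] B) (a : A) :
    LinearMap.lcomp R E (LinearMap.lcomp R E f) (LinearMap.applyₗ (R := R) (M := A) (M₂ := E) a)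
      = LinearMap.applyₗ (R := R) (M := B) (M₂ := E) (f a) := by
  ext φ; rfl

end dual

section trans

variable {A B C : Type*} [AddCommGroup A] [Module R A] [AddCommGroup B] [Module R B]
  [AddCommGroup C] [Module R C]

theorem ev_nat' (f : A →ₗ[R] B) (a : A) :
    LinearMap.lcomp R E (LinearMap.lcomp R E f) (LinearMap.applyₗ (R := R) (M := A) (M₂ := E) a)
      = LinearMap.applyₗ (R := R) (M := B) (M₂ := E) (f a) := by
  ext φ; rfl

theorem dual_inj' {f : A →ₗ[R] B} (hf : Surjective f) :
    Function.Injective (LinearMap.lcomp R E f) := by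
  intro φ ψ h
  ext b
  obtain ⟨a, rfl⟩ := hf b
  exact DFunLike.congr_fun h a

/-- surjectivity of evaluation transports along surjections (using Baer property). -/
theorem ev_surj_of_surj (hB : Module.Baer R E) {f : A →ₗ[R] B} (hf : Surjective f)
    (hA : Surjective (LinearMap.applyₗ (R := R) (M := A) (M₂ := E))) :
    Surjective (LinearMap.applyₗ (R := R) (M := B) (M₂ := E)) := by
  intro ξ
  obtain ⟨ζ, hζ⟩ := (fun g => hB.extension_property (LinearMap.lcomp R E f)
      (dual_inj' hf) g : Surjective (LinearMap.lcomp R E (LinearMap.lcomp R E f))) ξ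
  obtain ⟨a, ha⟩ := hA ζ
  exact ⟨f a, by rw [← ev_nat' f a, ha]; exact hζ⟩


theorem ev_surj_subsingleton [Subsingleton B] :
    Surjective (LinearMap.applyₗ (R := R) (M := B) (M₂ := E)) := by
  intro ξ
  refine ⟨0, ?_⟩
  ext φ
  have hφ0 : φ = 0 := by ext b; rw [Subsingleton.elim b 0, map_zero]; simp
  rw [hφ0, map_zero]
  simp

/-- the four-lemma style extension step -/
theorem ev_surj_ext (hB : Module.Baer R E) {i : A →ₗ[R] B} {q : B →ₗ[R] C}
    (hi : Function.Injective i) (hq : Surjective q)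
    (hiq : LinearMap.range i = LinearMap.ker q)
    (hA : Surjective (LinearMap.applyₗ (R := R) (M := A) (M₂ := E)))
    (hC : Surjective (LinearMap.applyₗ (R := R) (M := C) (M₂ := E))) :
    Surjective (LinearMap.applyₗ (R := R) (M := B) (M₂ := E)) := by
  classical
  intro ξ
  -- push to C-double-dual
  obtain ⟨c, hc⟩ := hC (LinearMap.lcomp R E (LinearMap.lcomp R E q) ξ)
  obtain ⟨b, rfl⟩ := hq c
  -- the difference is killed by ddq
  set δ := ξ - LinearMap.applyₗ (R := R) (M := B) (M₂ := E) b with hδ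
  have hδ0 : LinearMap.lcomp R E (LinearMap.lcomp R E q) δ = 0 := by
    rw [hδ, map_sub, ev_nat' q b, hc, sub_self]
  -- δ kills the image of D C in D B, i.e. δ ∘ (lcomp q) = 0; view δ : D B → E
  -- exactness of first dual row: range (lcomp q) = ker (lcomp i)
  -- we need : δ vanishes on ker (lcomp i), so δ factors through range (lcomp i) = D A
  -- dual of (lcomp i) surjectivity chase:
  -- lcomp i : D B → D A is surjective (hB, hi). δ : D B → E kills ker (lcomp i)?
  have hker : LinearMap.ker (LinearMap.lcomp R E i) ≤ LinearMap.ker δ := by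
    intro φ hφ
    -- φ : B → E with φ ∘ i = 0 ; then φ = ψ ∘ q for some ψ
    obtain ⟨ψ, hψ⟩ := dual_exact (R := R) (E := E) hq hiq φ hφ
    have := DFunLike.congr_fun hδ0 ψ
    simpa [← hψ] using this
  -- now δ factors through D A via surjectivity of lcomp i
  have hsurj : Surjective (LinearMap.lcomp R E i) := fun g =>
    hB.extension_property i hi g
  -- build η : D A → E
  set η : (A →ₗ[R] E) →ₗ[R] E := (Submodule.liftQ _ δ hker) ∘ₗ
    (LinearMap.quotKerEquivRange (LinearMap.lcomp R E i)).symm.toLinearMap ∘ₗ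
    LinearMap.codRestrict _ LinearMap.id
      (fun ψ => LinearMap.range_eq_top.2 hsurj ▸ Submodule.mem_top) with hη
  obtain ⟨a, ha⟩ := hA η
  refine ⟨b + i a, ?_⟩
  have : LinearMap.lcomp R E (LinearMap.lcomp R E i) η = δ := by
    ext φ
    simp only [hη, LinearMap.lcomp_apply, LinearMap.comp_apply, LinearMap.codRestrict_apply,
      LinearMap.id_apply, LinearEquiv.coe_coe]
    rw [show ((LinearMap.codRestrict (LinearMap.range (LinearMap.lcomp R E i)) LinearMap.id
        (fun ψ => LinearMap.range_eq_top.2 hsurj ▸ Submodule.mem_top))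
          ((LinearMap.lcomp R E i) φ) : LinearMap.range (LinearMap.lcomp R E i)) =
        ⟨(LinearMap.lcomp R E i) φ, LinearMap.mem_range_self _ φ⟩ from rfl,
      LinearMap.quotKerEquivRange_symm_apply_image]
    simp
  rw [map_add, ← ev_nat' i a, ha, this, hδ]
  abel

end trans




theorem ev_surj_pi {κ : Type*} [Fintype κ] [DecidableEq κ]
    {A : Type*} [AddCommGroup A] [Module R A]
    (hA : Surjective (LinearMap.applyₗ (R := R) (M := A) (M₂ := E))) :
    Surjective (LinearMap.applyₗ (R := R) (M := (κ → A)) (M₂ := E)) := by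
  classical
  intro ξ
  choose a ha using fun i : κ =>
    hA (LinearMap.lcomp R E (LinearMap.lcomp R E (LinearMap.proj i)) ξ)
  refine ⟨a, ?_⟩
  ext φ
  show φ a = ξ φ
  have hdec : φ = ∑ i : κ,
      (φ ∘ₗ LinearMap.single R (fun _ : κ => A) i) ∘ₗ LinearMap.proj i := by
    apply LinearMap.ext
    intro w
    rw [LinearMap.sum_apply]
    simp only [LinearMap.comp_apply, LinearMap.proj_apply, LinearMap.single_apply]
    rw [← map_sum]
    congr 1
    exact (Finset.univ_sum_single w).symm
  have key : ∀ i : κ,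
      ξ ((φ ∘ₗ LinearMap.single R (fun _ : κ => A) i) ∘ₗ LinearMap.proj i)
        = φ (Pi.single i (a i)) := fun i =>
    (DFunLike.congr_fun (ha i) (φ ∘ₗ LinearMap.single R (fun _ : κ => A) i)).symm
  have h2 : ξ φ = ∑ i, φ (Pi.single i (a i)) := by
    conv_lhs => rw [hdec]
    rw [map_sum]
    exact Finset.sum_congr rfl (fun i _ => key i)
  rw [h2, ← map_sum]
  congr 1
  exact (Finset.univ_sum_single a).symm

/-- smallness extension lemma -/
theorem small_of_submodule_quotient {B : Type*} [AddCommGroup B] [Module R B]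
    (p : Submodule R B) [Small.{v} p] [Small.{v} (B ⧸ p)] : Small.{v} B := by
  classical
  have hs := Submodule.mkQ_surjective p
  set σ : (B ⧸ p) → B := Function.surjInv hs with hσdef
  have hσ : ∀ y, Submodule.mkQ p (σ y) = y := Function.rightInverse_surjInv hs
  have hmem : ∀ b : B, b - σ (Submodule.mkQ p b) ∈ p := by
    intro b
    have h0 : Submodule.mkQ p (b - σ (Submodule.mkQ p b)) = 0 := by
      rw [map_sub, hσ, sub_self]
    simpa using (Submodule.Quotient.mk_eq_zero p).1 h0
  have hinj : Function.Injective (fun b : B =>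
      ((Submodule.mkQ p b, ⟨b - σ (Submodule.mkQ p b), hmem b⟩) : (B ⧸ p) × p)) := by
    intro b b' heq
    have h1 : Submodule.mkQ p b = Submodule.mkQ p b' := congrArg Prod.fst heq
    have h2 : b - σ (Submodule.mkQ p b) = b' - σ (Submodule.mkQ p b') :=
      congrArg Subtype.val (congrArg Prod.snd heq)
    have := h2
    rw [h1] at this
    exact sub_left_inj.mp this
  exact small_of_injective hinj

/-- a f.g. module killed by the maximal ideal is small if the residue field is -/
theorem small_vs [IsLocalRing R] [Small.{v} (ResidueField R)]
    {X : Type*} [AddCommGroup X] [Module R X] [Module.Finite R X]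
    (h : maximalIdeal R • (⊤ : Submodule R X) = ⊥) : Small.{v} X := by
  classical
  obtain ⟨d, g, hg⟩ := Module.Finite.exists_fin (R := R) (M := X)
  have hkill : ∀ (r : R), r ∈ maximalIdeal R → ∀ x : X, r • x = 0 := by
    intro r hr x
    have : r • x ∈ maximalIdeal R • (⊤ : Submodule R X) :=
      Submodule.smul_mem_smul hr Submodule.mem_top
    rw [h] at this
    simpa using this
  set f : (Fin d → ResidueField R) → X := fun c => ∑ i,
    Quotient.liftOn' (c i) (fun r => r • g i) (by
      intro r r' hrr
      have : r - r' ∈ maximalIdeal R := by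
        rwa [Submodule.quotientRel_def] at hrr
      have h0 := hkill _ this (g i)
      rw [sub_smul] at h0
      exact (sub_eq_zero.mp h0)) with hf
  apply small_of_surjective (f := f)
  intro x
  have hx : x ∈ Submodule.span R (Set.range g) := hg ▸ Submodule.mem_top
  rw [Submodule.mem_span_range_iff_exists_fun] at hx
  obtain ⟨c, hc⟩ := hx
  refine ⟨fun i => Submodule.Quotient.mk (c i), ?_⟩
  rw [hf]
  exact hc

theorem small_quotient_pow [IsLocalRing R] [IsNoetherianRing R] [Small.{v} (ResidueField R)]
    (n : ℕ) : Small.{v} (R ⧸ (maximalIdeal R ^ n : Ideal R)) := by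
  induction n with
  | zero =>
    have : Subsingleton (R ⧸ (maximalIdeal R ^ 0 : Ideal R)) := by
      rw [pow_zero, Ideal.one_eq_top]
      exact Submodule.Quotient.subsingleton_iff.mpr rfl
    exact small_subsingleton _
  | succ n ih =>
    set B := R ⧸ (maximalIdeal R ^ (n + 1) : Ideal R) with hB
    set p : Submodule R B :=
      Submodule.map (maximalIdeal R ^ (n + 1) : Ideal R).mkQ (maximalIdeal R ^ n) with hp
    haveI : Small.{v} p := by
      haveI : Module.Finite R B := Module.Finite.quotient R _
      haveI : Module.Finite R p := Module.Finite.iff_fg.mpr (IsNoetherian.noetherian p)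
      apply small_vs (R := R)
      rw [eq_bot_iff, Submodule.smul_le]
      rintro r hr x -
      obtain ⟨y, hy, hmk⟩ := Submodule.mem_map.mp x.2
      have h0 : r • (x : B) = 0 := by
        rw [← hmk, ← map_smul, Submodule.mkQ_apply, Submodule.Quotient.mk_eq_zero]
        have h1 : y * r ∈ maximalIdeal R ^ n * maximalIdeal R := Ideal.mul_mem_mul hy hr
        rw [← pow_succ] at h1
        simpa [smul_eq_mul, mul_comm r y] using h1
      rw [Submodule.mem_bot]
      exact Subtype.ext (by simpa using h0)
    haveI : Small.{v} (B ⧸ p) := by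
      set F : R →ₗ[R] B ⧸ p := p.mkQ ∘ₗ ((maximalIdeal R ^ (n + 1) : Ideal R)).mkQ with hF
      have hFs : Function.Surjective F :=
        (Submodule.mkQ_surjective p).comp (Submodule.mkQ_surjective _)
      have hle : (maximalIdeal R ^ n : Ideal R) ≤ LinearMap.ker F := by
        intro y hy
        rw [LinearMap.mem_ker, hF, LinearMap.comp_apply, Submodule.mkQ_apply,
          Submodule.mkQ_apply, Submodule.Quotient.mk_eq_zero]
        exact Submodule.mem_map_of_mem hy
      have hGs : Function.Surjective (Submodule.liftQ _ F hle) := by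
        intro z
        obtain ⟨r, hr⟩ := hFs z
        exact ⟨Submodule.Quotient.mk r, hr⟩
      exact small_of_surjective hGs
    exact small_of_submodule_quotient p


variable [IsLocalRing R] {ι : ResidueField R →ₗ[R] E}

theorem smul_top_ideal (I : Ideal R) : (I • (⊤ : Submodule R R)) = I := by
  apply le_antisymm
  · exact Submodule.smul_le.mpr (fun r hr m _ => Ideal.mul_mem_right m I hr)
  · intro r hr
    simpa using Submodule.smul_mem_smul hr (Submodule.mem_top (x := (1 : R)))

theorem small_R_of_complete [IsLocalRing R] [IsNoetherianRing R] [Small.{v} (ResidueField R)]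
    [IsAdicComplete (maximalIdeal R) R]
    (hsq : ∀ n : ℕ, Small.{v} (R ⧸ (maximalIdeal R ^ n : Ideal R))) : Small.{v} R := by
  haveI := hsq
  haveI : Small.{v} (∀ n : ℕ, R ⧸ (maximalIdeal R ^ n : Ideal R)) := by
    infer_instance
  have hinj : Function.Injective (fun r : R =>
      (fun n => (Submodule.Quotient.mk r : R ⧸ (maximalIdeal R ^ n : Ideal R)))) := by
    intro r r' h
    have hmem : ∀ n : ℕ, r - r' ∈ (maximalIdeal R ^ n : Ideal R) := by
      intro n
      have h1 : (Submodule.Quotient.mk r : R ⧸ (maximalIdeal R ^ n : Ideal R))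
          = Submodule.Quotient.mk r' := congrFun h n
      rwa [Submodule.Quotient.eq] at h1
    have hh : r - r' = 0 := by
      apply IsHausdorff.haus (inferInstance : IsHausdorff (maximalIdeal R) R)
      intro n
      rw [SModEq.zero, smul_top_ideal]
      exact hmem n
    exact sub_eq_zero.mp hh
  exact small_of_injective hinj



/-- the `m^n`-torsion submodule of `E` -/
def En [IsLocalRing R] (E : Type*) [AddCommGroup E] [Module R E] (n : ℕ) : Submodule R E where
  carrier := {x | ∀ a ∈ (maximalIdeal R ^ n : Ideal R), a • x = 0}
  zero_mem' := fun a _ => smul_zero a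
  add_mem' := by
    intro x y hx hy a ha
    rw [smul_add, hx a ha, hy a ha, add_zero]
  smul_mem' := by
    intro c x hx a ha
    rw [smul_comm, hx a ha, smul_zero]

theorem En_mono [IsLocalRing R] {m n : ℕ} (h : m ≤ n) : En (R := R) E m ≤ En (R := R) E n := by
  intro x hx a ha
  exact hx a (Ideal.pow_le_pow_right h ha)



/-- every nonzero submodule of `E` contains the image of `ι` -/
theorem range_le_of_ne_bot (hι : Function.Injective ι)
    (hess : ∀ N : Submodule R E, N ≠ ⊥ → N ⊓ LinearMap.range ι ≠ ⊥)
    {N : Submodule R E} (hN : N ≠ ⊥) : LinearMap.range ι ≤ N := by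
  obtain ⟨w, hw, hw0⟩ := Submodule.exists_mem_ne_zero_of_ne_bot (hess N hN)
  rw [Submodule.mem_inf] at hw
  have hwN : w ∈ N := hw.1
  obtain ⟨c, rfl⟩ := hw.2
  have hc0 : c ≠ 0 := fun h => hw0 (by rw [h, map_zero])
  rintro _ ⟨c', rfl⟩
  obtain ⟨u, hu⟩ := residue_surjective (R := R) (c' * c⁻¹)
  have key : ι c' = u • ι c := by
    rw [← map_smul]
    congr 1
    obtain ⟨t, rfl⟩ := residue_surjective (R := R) c
    have h2 : u • residue R t = residue R u * residue R t := by
      rw [← map_mul]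
      rfl
    rw [h2, hu, mul_assoc, inv_mul_cancel₀ hc0, mul_one]
  rw [key]
  exact N.smul_mem u hwN

/-- `E` is `m`-power torsion -/
theorem exists_mem_En [IsNoetherianRing R] (hι : Function.Injective ι)
    (hess : ∀ N : Submodule R E, N ≠ ⊥ → N ⊓ LinearMap.range ι ≠ ⊥)
    (x : E) : ∃ n, x ∈ En (R := R) E n := by
  by_contra hcon
  push_neg at hcon
  have hex : ∀ n : ℕ, ∃ a ∈ (maximalIdeal R ^ n : Ideal R), a • x ≠ 0 := by
    intro n
    have := hcon n
    simp only [En, Submodule.mem_mk, AddSubmonoid.mem_mk, AddSubsemigroup.mem_mk,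
      Set.mem_setOf_eq] at this
    push_neg at this
    exact this
  set T : R →ₗ[R] E := LinearMap.toSpanSingleton R E x with hT
  set C := R ⧸ LinearMap.ker T with hC
  set j : C →ₗ[R] E := Submodule.liftQ (LinearMap.ker T) T (by exact le_rfl) with hj
  have hjinj : Function.Injective j := by
    rw [← LinearMap.ker_eq_bot, hj, Submodule.ker_liftQ_eq_bot]
    exact le_rfl
  have hjr : LinearMap.range j = LinearMap.range T := Submodule.range_liftQ _ _ _
  haveI : Module.Finite R C := Module.Finite.quotient R _
  have hKrull : (⨅ n : ℕ, (maximalIdeal R ^ n • ⊤ : Submodule R C)) = ⊥ :=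
    Ideal.iInf_pow_smul_eq_bot_of_isLocalRing _ (Ideal.IsMaximal.ne_top inferInstance)
  have hNn : ∀ n : ℕ, ∃ w : C, w ∈ (maximalIdeal R ^ n • ⊤ : Submodule R C) ∧ j w = ι 1 := by
    intro n
    have hne : (maximalIdeal R ^ n • LinearMap.range T : Submodule R E) ≠ ⊥ := by
      obtain ⟨a, ha, hax⟩ := hex n
      intro hbot
      apply hax
      have : a • x ∈ (maximalIdeal R ^ n • LinearMap.range T : Submodule R E) :=
        Submodule.smul_mem_smul ha ⟨1, by simp [hT]⟩
      rw [hbot] at this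
      simpa using this
    have hle := range_le_of_ne_bot hι hess hne
    have hmem : ι 1 ∈ (maximalIdeal R ^ n • LinearMap.range T : Submodule R E) :=
      hle ⟨1, rfl⟩
    rw [← hjr, ← Submodule.map_top, ← Submodule.map_smul''] at hmem
    obtain ⟨w, hw, hjw⟩ := Submodule.mem_map.mp hmem
    exact ⟨w, hw, hjw⟩
  obtain ⟨w, hw0, hjw0⟩ := hNn 0
  have hwall : ∀ n : ℕ, w ∈ (maximalIdeal R ^ n • ⊤ : Submodule R C) := by
    intro n
    obtain ⟨w', hw', hjw'⟩ := hNn n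
    have : w' = w := hjinj (by rw [hjw', hjw0])
    rwa [this] at hw'
  have : w = 0 := by
    have := Submodule.mem_iInf (fun n : ℕ => (maximalIdeal R ^ n • ⊤ : Submodule R C))
        |>.mpr hwall
    rwa [hKrull, Submodule.mem_bot] at this
  apply hι.ne_iff.mpr (one_ne_zero : (1 : ResidueField R) ≠ 0)
  rw [map_zero, ← hjw0, this, map_zero]



theorem socle_le (hι : Function.Injective ι)
    (hess : ∀ N : Submodule R E, N ≠ ⊥ → N ⊓ LinearMap.range ι ≠ ⊥)
    (y : E) (hy : ∀ a ∈ maximalIdeal R, a • y = 0) : y ∈ LinearMap.range ι := by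
  by_cases hy0 : y = 0
  · rw [hy0]; exact Submodule.zero_mem _
  have hN : (Submodule.span R {y} : Submodule R E) ≠ ⊥ := by
    intro h
    exact hy0 (Submodule.span_singleton_eq_bot.mp h)
  have hle := range_le_of_ne_bot hι hess hN
  have h1 : ι 1 ∈ Submodule.span R {y} := hle ⟨1, rfl⟩
  obtain ⟨r, hr⟩ := Submodule.mem_span_singleton.mp h1
  have hru : IsUnit r := by
    by_contra hnr
    have : r ∈ maximalIdeal R := hnr
    rw [hy r this] at hr
    exact hι.ne_iff.mpr (one_ne_zero : (1 : ResidueField R) ≠ 0) (by rw [map_zero, hr])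
  obtain ⟨u, rfl⟩ := hru
  refine ⟨(↑u⁻¹ : R) • 1, ?_⟩
  rw [map_smul, ← hr, smul_smul, Units.inv_mul, one_smul]

theorem ev_surj_k (hι : Function.Injective ι)
    (hess : ∀ N : Submodule R E, N ≠ ⊥ → N ⊓ LinearMap.range ι ≠ ⊥) :
    Surjective (LinearMap.applyₗ (R := R) (M := ResidueField R) (M₂ := E)) := by
  intro ξ
  have hspan : ∀ f : ResidueField R →ₗ[R] E, ∃ s : R, f = s • ι := by
    intro f
    have h1 : f 1 ∈ LinearMap.range ι := by
      apply socle_le hι hess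
      intro a ha
      have h2 : a • (1 : ResidueField R) = 0 := by
        show residue R (a * 1) = 0
        rw [mul_one]
        exact Ideal.Quotient.eq_zero_iff_mem.mpr ha
      rw [← map_smul, h2, map_zero]
    obtain ⟨cz, hcz⟩ := h1
    obtain ⟨s, rfl⟩ := residue_surjective cz
    refine ⟨s, ?_⟩
    apply LinearMap.ext
    intro z
    obtain ⟨t, rfl⟩ := residue_surjective z
    have h3 : f (residue R t) = t • f (1 : ResidueField R) := by
      rw [← map_smul]
      congr 1
      show residue R t = residue R (t * 1)
      rw [mul_one]
    rw [h3, ← hcz]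
    show t • ι (residue R s) = s • ι (residue R t)
    rw [← ι.map_smul, ← ι.map_smul]
    congr 1
    show residue R (t * s) = residue R (s * t)
    rw [mul_comm]
  have h2 : ξ ι ∈ LinearMap.range ι := by
    apply socle_le hι hess
    intro a ha
    have hai : a • ι = (0 : ResidueField R →ₗ[R] E) := by
      apply LinearMap.ext
      intro z
      obtain ⟨t, rfl⟩ := residue_surjective z
      rw [LinearMap.smul_apply, ← map_smul]
      show ι (residue R (a * t)) = 0
      have h4 : residue R (a * t) = 0 :=
        Ideal.Quotient.eq_zero_iff_mem.mpr (Ideal.mul_mem_right t _ ha)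
      rw [h4, map_zero]
    rw [← map_smul, hai, map_zero]
  obtain ⟨c0, hc0⟩ := h2
  refine ⟨c0, ?_⟩
  apply LinearMap.ext
  intro f
  obtain ⟨s, rfl⟩ := hspan f
  show (s • ι) c0 = ξ (s • ι)
  rw [map_smul, LinearMap.smul_apply, hc0]

theorem ev_surj_vs (hB : Module.Baer R E)
    (hk : Surjective (LinearMap.applyₗ (R := R) (M := ResidueField R) (M₂ := E)))
    {X : Type*} [AddCommGroup X] [Module R X] [Module.Finite R X]
    (h : maximalIdeal R • (⊤ : Submodule R X) = ⊥) :
    Surjective (LinearMap.applyₗ (R := R) (M := X) (M₂ := E)) := by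
  classical
  have htor : Module.IsTorsionBySet R X (maximalIdeal R : Set R) := by
    intro x a
    have : (a : R) • x ∈ maximalIdeal R • (⊤ : Submodule R X) :=
      Submodule.smul_mem_smul a.2 Submodule.mem_top
    rw [h] at this
    simpa using this
  letI : Module (ResidueField R) X := htor.module
  letI : IsScalarTower R (ResidueField R) X := htor.isScalarTower
  haveI : Module.Finite (ResidueField R) X :=
    Module.Finite.of_restrictScalars_finite R (ResidueField R) X
  let e : X ≃ₗ[ResidueField R]
      (Fin (Module.finrank (ResidueField R) X) → ResidueField R) :=
    (Module.finBasis (ResidueField R) X).equivFun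
  let e' : X ≃ₗ[R] (Fin (Module.finrank (ResidueField R) X) → ResidueField R) :=
    e.restrictScalars R
  exact ev_surj_of_surj hB (f := e'.symm.toLinearMap) e'.symm.surjective (ev_surj_pi hk)

theorem ev_surj_torsion [IsNoetherianRing R] (hB : Module.Baer R E)
    (hk : Surjective (LinearMap.applyₗ (R := R) (M := ResidueField R) (M₂ := E)))
    (n : ℕ) {X : Type*} [AddCommGroup X] [Module R X] [Module.Finite R X]
    (h : (maximalIdeal R ^ n : Ideal R) • (⊤ : Submodule R X) = ⊥) :
    Surjective (LinearMap.applyₗ (R := R) (M := X) (M₂ := E)) := by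
  induction n generalizing X with
  | zero =>
    haveI : Subsingleton X := by
      constructor
      intro a b
      have hx : ∀ x : X, x = 0 := by
        intro x
        have : x ∈ (maximalIdeal R ^ 0 : Ideal R) • (⊤ : Submodule R X) := by
          rw [pow_zero, Ideal.one_eq_top, Submodule.top_smul]
          exact Submodule.mem_top
        rw [h] at this
        simpa using this
      rw [hx a, hx b]
    exact ev_surj_subsingleton
  | succ n ih =>
    set A : Submodule R X := (maximalIdeal R ^ n : Ideal R) • ⊤ with hA
    haveI : Module.Finite R A := Module.Finite.iff_fg.mpr (IsNoetherian.noetherian A)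
    have hAvs : maximalIdeal R • (⊤ : Submodule R A) = ⊥ := by
      rw [eq_bot_iff]
      intro x hx
      have hmap : Submodule.map A.subtype (maximalIdeal R • (⊤ : Submodule R A))
          = maximalIdeal R • A := by
        rw [Submodule.map_smul'', Submodule.map_top, Submodule.range_subtype]
      have hx' : (x : X) ∈ maximalIdeal R • A := by
        rw [← hmap]
        exact Submodule.mem_map_of_mem hx
      have : maximalIdeal R • A = ⊥ := by
        rw [hA, ← mul_smul, ← pow_succ']
        exact h
      rw [this] at hx'
      rw [Submodule.mem_bot]
      exact Subtype.ext (by simpa using hx')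
    have hQ : (maximalIdeal R ^ n : Ideal R) • (⊤ : Submodule R (X ⧸ A)) = ⊥ := by
      rw [eq_bot_iff, Submodule.smul_le]
      rintro a ha z -
      obtain ⟨x, rfl⟩ := Submodule.mkQ_surjective A z
      rw [Submodule.mem_bot, ← map_smul, Submodule.mkQ_apply, Submodule.Quotient.mk_eq_zero]
      rw [hA]
      exact Submodule.smul_mem_smul ha Submodule.mem_top
    exact ev_surj_ext hB (i := A.subtype) (q := A.mkQ) (Submodule.injective_subtype A)
      (Submodule.mkQ_surjective A) ((A.range_subtype).trans (A.ker_mkQ).symm)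
      (ev_surj_vs hB hk hAvs) (ih hQ)

theorem ev_surj_quot_pow [IsNoetherianRing R] (hB : Module.Baer R E)
    (hk : Surjective (LinearMap.applyₗ (R := R) (M := ResidueField R) (M₂ := E)))
    (n : ℕ) :
    Surjective (LinearMap.applyₗ (R := R) (M := R ⧸ (maximalIdeal R ^ n : Ideal R)) (M₂ := E)) := by
  apply ev_surj_torsion hB hk n
  rw [eq_bot_iff, Submodule.smul_le]
  rintro a ha z -
  obtain ⟨r, rfl⟩ := Submodule.mkQ_surjective _ z
  rw [Submodule.mem_bot, ← map_smul, Submodule.mkQ_apply, Submodule.Quotient.mk_eq_zero]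
  exact Ideal.mul_mem_right r _ ha

/-- the torsion function associated to `y ∈ En n` -/
noncomputable def phiy (n : ℕ) (y : E) (hy : y ∈ En (R := R) E n) :
    (R ⧸ (maximalIdeal R ^ n : Ideal R)) →ₗ[R] E :=
  Submodule.liftQ _ (LinearMap.toSpanSingleton R E y) (by
    intro a ha
    simpa using hy a ha)

theorem phiy_mk (n : ℕ) (y : E) (hy : y ∈ En (R := R) E n) (r : R) :
    phiy n y hy (Submodule.Quotient.mk r) = r • y := rfl

theorem ann_En (hB : Module.Baer R E) {ι : ResidueField R →ₗ[R] E}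
    (hι : Function.Injective ι) (n : ℕ) (r : R)
    (h : ∀ y ∈ En (R := R) E n, r • y = 0) : r ∈ (maximalIdeal R ^ n : Ideal R) := by
  by_contra hr
  have hmk : (Submodule.Quotient.mk r : R ⧸ (maximalIdeal R ^ n : Ideal R)) ≠ 0 := by
    rw [Ne, Submodule.Quotient.mk_eq_zero]
    exact hr
  obtain ⟨φ, hφ⟩ := cog hB hι _ hmk
  have hmem : φ (Submodule.Quotient.mk 1) ∈ En (R := R) E n := by
    intro a ha
    have h1 : a • (Submodule.Quotient.mk 1 : R ⧸ (maximalIdeal R ^ n : Ideal R))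
        = Submodule.Quotient.mk a := by
      rw [← Submodule.Quotient.mk_smul]
      norm_num
    rw [← map_smul, h1, show (Submodule.Quotient.mk a : R ⧸ (maximalIdeal R ^ n : Ideal R)) = 0
      from (Submodule.Quotient.mk_eq_zero _).2 ha, map_zero]
  apply hφ
  have h2 : (Submodule.Quotient.mk r : R ⧸ (maximalIdeal R ^ n : Ideal R))
      = r • Submodule.Quotient.mk 1 := by
    rw [← Submodule.Quotient.mk_smul]
    norm_num
  rw [h2, map_smul]
  exact h _ hmem

/-- every endomorphism of `E` acts by a scalar on each `En` -/
theorem endE_on_En (n : ℕ)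
    (hev : Surjective (LinearMap.applyₗ
      (R := R) (M := R ⧸ (maximalIdeal R ^ n : Ideal R)) (M₂ := E)))
    (g : E →ₗ[R] E) : ∃ r : R, ∀ y ∈ En (R := R) E n, g y = r • y := by
  classical
  set N := R ⧸ (maximalIdeal R ^ n : Ideal R) with hN
  set gg : (N →ₗ[R] E) →ₗ[R] (N →ₗ[R] E) := LinearMap.llcomp R N E E g with hgg
  obtain ⟨y0, hy0⟩ := hev (LinearMap.lcomp R E gg
    (LinearMap.applyₗ (R := R) (M := N) (M₂ := E) (Submodule.Quotient.mk 1)))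
  obtain ⟨r, rfl⟩ := Submodule.mkQ_surjective _ y0
  refine ⟨r, ?_⟩
  intro y hy
  have key : ∀ φ : N →ₗ[R] E, g (φ (Submodule.Quotient.mk 1)) = φ (Submodule.Quotient.mk r) := by
    intro φ
    have h1 := DFunLike.congr_fun hy0 φ
    -- h1 : applyₗ (mk r) φ = (lcomp gg (applyₗ (mk 1))) φ
    -- LHS = φ (mk r), RHS = (applyₗ (mk 1)) (gg φ) = (g ∘ φ) (mk 1) = g (φ (mk 1))
    exact (h1).symm
  have h3 := key (phiy n y hy)
  rw [phiy_mk, one_smul, phiy_mk] at h3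
  exact h3

theorem endE_surj [IsNoetherianRing R] [IsAdicComplete (maximalIdeal R) R]
    (hB : Module.Baer R E) {ι : ResidueField R →ₗ[R] E} (hι : Function.Injective ι)
    (hess : ∀ N : Submodule R E, N ≠ ⊥ → N ⊓ LinearMap.range ι ≠ ⊥)
    (hev : ∀ n : ℕ, Surjective (LinearMap.applyₗ
      (R := R) (M := R ⧸ (maximalIdeal R ^ n : Ideal R)) (M₂ := E)))
    (g : E →ₗ[R] E) : ∃ r : R, ∀ x : E, g x = r • x := by
  choose r hr using fun n => endE_on_En (R := R) (E := E) n (hev n) g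
  have hcompat : ∀ {m n : ℕ}, m ≤ n →
      r m ≡ r n [SMOD ((maximalIdeal R ^ m : Ideal R) • ⊤ : Submodule R R)] := by
    intro m n hmn
    rw [SModEq.sub_mem, smul_top_ideal]
    apply ann_En hB hι
    intro y hy
    rw [sub_smul, ← hr m y hy, ← hr n y (En_mono hmn hy), sub_self]
  obtain ⟨L, hL⟩ := IsPrecomplete.prec (inferInstance : IsPrecomplete (maximalIdeal R) R) hcompat
  refine ⟨L, ?_⟩
  intro x
  obtain ⟨n, hx⟩ := exists_mem_En hι hess x
  have h1 : r n - L ∈ (maximalIdeal R ^ n : Ideal R) := by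
    have := hL n
    rwa [SModEq.sub_mem, smul_top_ideal] at this
  have h2 : (r n - L) • x = 0 := hx _ h1
  rw [sub_smul, sub_eq_zero] at h2
  rw [hr n x hx, h2]

theorem ev_surj_R [IsNoetherianRing R] [IsAdicComplete (maximalIdeal R) R]
    (hB : Module.Baer R E) {ι : ResidueField R →ₗ[R] E} (hι : Function.Injective ι)
    (hess : ∀ N : Submodule R E, N ≠ ⊥ → N ⊓ LinearMap.range ι ≠ ⊥)
    (hev : ∀ n : ℕ, Surjective (LinearMap.applyₗ
      (R := R) (M := R ⧸ (maximalIdeal R ^ n : Ideal R)) (M₂ := E))) :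
    Surjective (LinearMap.applyₗ (R := R) (M := R) (M₂ := E)) := by
  intro ξ
  set ℓ : E ≃ₗ[R] (R →ₗ[R] E) := (LinearMap.ringLmapEquivSelf R R E).symm with hℓ
  have hℓap : ∀ (e : E) (s : R), ℓ e s = s • e := by
    intro e s
    simp [hℓ, LinearMap.ringLmapEquivSelf]
  set g : E →ₗ[R] E := ξ ∘ₗ (ℓ : E →ₗ[R] (R →ₗ[R] E)) with hg
  obtain ⟨rr, hrr⟩ := endE_surj hB hι hess hev g
  refine ⟨rr, ?_⟩
  apply LinearMap.ext
  intro φ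
  have hφ : φ = ℓ (φ 1) := by
    apply LinearMap.ext
    intro s
    rw [hℓap, ← map_smul, smul_eq_mul, mul_one]
  show φ rr = ξ φ
  have h5 : ξ φ = rr • φ 1 := by
    conv_lhs => rw [hφ]
    exact hrr (φ 1)
  have h6 : φ rr = rr • φ 1 := by
    conv_lhs => rw [hφ]
    rw [hℓap]
  rw [h6, h5]
theorem artinianE [IsNoetherianRing R]
    (hB : Module.Baer R E) {ι : ResidueField R →ₗ[R] E} (hι : Function.Injective ι)
    (hend : ∀ g : E →ₗ[R] E, ∃ r : R, ∀ x : E, g x = r • x) : IsArtinian R E := by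
  have hsat : ∀ (N : Submodule R E) (x : E), x ∉ N → ∃ rr ∈ N.annihilator, rr • x ≠ 0 := by
    intro N x hx
    have hx0 : (Submodule.Quotient.mk x : E ⧸ N) ≠ 0 := by
      rw [Ne, Submodule.Quotient.mk_eq_zero]
      exact hx
    obtain ⟨φ, hφ⟩ := cog hB hι _ hx0
    obtain ⟨rr, hrr⟩ := hend (φ ∘ₗ N.mkQ)
    refine ⟨rr, ?_, ?_⟩
    · rw [Submodule.mem_annihilator]
      intro nn hnn
      have h1 := hrr nn
      rw [LinearMap.comp_apply, Submodule.mkQ_apply,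
        show (Submodule.Quotient.mk nn : E ⧸ N) = 0 from (Submodule.Quotient.mk_eq_zero _).2 hnn,
        map_zero] at h1
      exact h1.symm
    · intro h0
      apply hφ
      have h1 := hrr x
      rw [LinearMap.comp_apply, Submodule.mkQ_apply] at h1
      rw [h1] at *
      exact h0
  have hinj : ∀ N₁ N₂ : Submodule R E, N₁.annihilator = N₂.annihilator → N₁ = N₂ := by
    have hhalf : ∀ N₁ N₂ : Submodule R E, N₁.annihilator = N₂.annihilator → N₁ ≤ N₂ := by
      intro N₁ N₂ hann x hx
      by_contra hxn
      obtain ⟨rr, hrr, hrx⟩ := hsat N₂ x hxn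
      rw [← hann, Submodule.mem_annihilator] at hrr
      exact hrx (hrr x hx)
    intro N₁ N₂ h
    exact le_antisymm (hhalf _ _ h) (hhalf _ _ h.symm)
  constructor
  apply Subrelation.wf (r := InvImage (· > ·) (Submodule.annihilator (R := R) (M := E)))
  · intro a b hab
    have hle : b.annihilator ≤ a.annihilator := by
      intro r hr
      rw [Submodule.mem_annihilator] at hr ⊢
      exact fun m hm => hr m (le_of_lt hab hm)
    have hne : a.annihilator ≠ b.annihilator := by
      intro h
      exact absurd (hinj _ _ h) (ne_of_lt hab)
    exact lt_of_le_of_ne hle (fun h => hne h.symm)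
  · exact InvImage.wf _ (isNoetherian_iff.mp (inferInstance : IsNoetherian R R))

theorem artinian_dual [IsArtinian R E] {M : Type*} [AddCommGroup M] [Module R M]
    {b : ℕ} (π : (Fin b → R) →ₗ[R] M) (hπ : Surjective π) :
    IsArtinian R (M →ₗ[R] E) := by
  classical
  set Φ : ((Fin b → R) →ₗ[R] E) →ₗ[R] (Fin b → E) :=
    LinearMap.pi (fun i => LinearMap.applyₗ (Pi.single i 1)) with hΦ
  have hΦinj : Function.Injective Φ := by
    rw [← LinearMap.ker_eq_bot, eq_bot_iff]
    intro f hf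
    rw [LinearMap.mem_ker] at hf
    rw [Submodule.mem_bot]
    apply LinearMap.ext
    intro v
    have hv : v = ∑ i, Pi.single i (v i) := (Finset.univ_sum_single v).symm
    rw [hv, map_sum, LinearMap.zero_apply]
    apply Finset.sum_eq_zero
    intro i _
    have hs : (Pi.single i (v i) : Fin b → R) = v i • (Pi.single i 1 : Fin b → R) := by
      rw [← Pi.single_smul, smul_eq_mul, mul_one]
    rw [hs, map_smul]
    have h0 : f (Pi.single i 1) = 0 := congrFun hf i
    rw [h0, smul_zero]
  have hinj2 : Function.Injective (LinearMap.lcomp R E π) := by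
    intro φ ψ h
    apply LinearMap.ext
    intro m
    obtain ⟨v, rfl⟩ := hπ m
    exact DFunLike.congr_fun h v
  exact isArtinian_of_injective (Φ ∘ₗ LinearMap.lcomp R E π) (hΦinj.comp hinj2)

theorem baer_aux {R : Type uu} [CommRing R] [IsLocalRing R] [IsNoetherianRing R]
    [IsAdicComplete (maximalIdeal R) R] {E : Type vv} [AddCommGroup E] [Module R E]
    [Module.Injective R E] {ι : ResidueField R →ₗ[R] E} (hι : Function.Injective ι) :
    Module.Baer R E := by
  haveI h1 : Small.{vv} (ResidueField R) := small_of_injective hι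
  haveI h2 : Small.{vv} R := small_R_of_complete (fun n => small_quotient_pow n)
  exact Module.Baer.of_injective inferInstance

end MatlisAux

/-- **Matlis duality.** Let `(R, m, k)` be a complete Noetherian local ring and `E = E_R(k)`
an injective hull of the residue field `k` (encoded by: `E` is an injective `R`-module
containing `k` via `ι` as an essential submodule).  Then for every finitely generated
`R`-module `M`, the natural evaluation map `M → Hom_R(Hom_R(M, E), E)` is an isomorphism,
and `Hom_R(M, E)` is an Artinian `R`-module. -/
theorem matlis_duality
    (R : Type*) [CommRing R] [IsNoetherianRing R] [IsLocalRing R]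
    [IsAdicComplete (IsLocalRing.maximalIdeal R) R]
    (E : Type*) [AddCommGroup E] [Module R E] [Module.Injective R E]
    (ι : IsLocalRing.ResidueField R →ₗ[R] E) (hι : Function.Injective ι)
    (hess : ∀ N : Submodule R E, N ≠ ⊥ → N ⊓ LinearMap.range ι ≠ ⊥)
    (M : Type*) [AddCommGroup M] [Module R M] [Module.Finite R M] :
    Function.Bijective (LinearMap.applyₗ (R := R) (M := M) (M₂ := E)) ∧
      IsArtinian R (M →ₗ[R] E) := by
  classical
  have hB : Module.Baer R E := MatlisAux.baer_aux hι
  have hk := MatlisAux.ev_surj_k hι hess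
  have hev : ∀ n : ℕ, Function.Surjective (LinearMap.applyₗ
      (R := R) (M := R ⧸ (IsLocalRing.maximalIdeal R ^ n : Ideal R)) (M₂ := E)) :=
    fun n => MatlisAux.ev_surj_quot_pow hB hk n
  have hend := MatlisAux.endE_surj hB hι hess hev
  have hevR := MatlisAux.ev_surj_R hB hι hess hev
  obtain ⟨b, π, hπ⟩ := Module.Finite.exists_fin' R M
  refine ⟨⟨MatlisAux.ev_inj hB hι, ?_⟩, ?_⟩
  · exact MatlisAux.ev_surj_of_surj hB hπ (MatlisAux.ev_surj_pi hevR)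
  · haveI : IsArtinian R E := MatlisAux.artinianE hB hι hend
    exact MatlisAux.artinian_dual π hπ
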